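/- Let n = q·d with q ≥ 1 an integer, n > 1 and d ≥ 1. Let π = (π_1,…,π_n) be a uniformly random permutation of the multiset S = {1,…,1, 2,…,2, …, d,…,d} in which each element of {1,…,d} occurs exactly q times (equivalently, π is uniformly distributed on the set of functions from {1,…,n} to {1,…,d} such that every value is attained exactly q times). For i ∈ {1,…,n} define C_i(x) := d · x_{π_i} e_{π_i} for x ∈ ℝ^d. Then: (i) each C_i is unbiased; and (ii) for all a_1,…,a_n ∈ ℝ^d, E[‖(1/n)Σ_{i=1}^n C_i(a_i) − (1/n)Σ_{i=1}^n a_i‖²] ≤ (1 − (n−d)/(n−1))·(1/n)Σ_{i=1}^n ‖a_i‖² − (1 − (n−d)/(n−1))·‖(1/n)Σ_{i=1}^n a_i‖² (i.e. {C_i}_{i=1}^n satisfies the AB inequality with A = B = 1 − (n−d)/(n−1)). -/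

import Mathlib

open Finset

/-- Expectation (uniform average) over a finite type, valued in a real vector space. -/
noncomputable def finExp {α V : Type*} [Fintype α] [AddCommGroup V] [Module ℝ V]
    (F : α → V) : V :=
  (Fintype.card α : ℝ)⁻¹ • ∑ a, F a

/-- Random permutations of the multiset `{1,…,1,2,…,2,…,d,…,d}` (each value `q` times),
i.e. functions `Fin n → Fin d` attaining every value exactly `q` times. -/
def MultisetPerm (n d q : ℕ) : Type :=
  {f : Fin n → Fin d // ∀ v : Fin d, (Finset.univ.filter (fun i => f i = v)).card = q}

instance (n d q : ℕ) : Fintype (MultisetPerm n d q) := by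
  unfold MultisetPerm; infer_instance

/-- The PermK compressor in the case `n = q·d`: worker `i` sends `d · x_{π i} e_{π i}`. -/
noncomputable def permK (n d q : ℕ) (π : MultisetPerm n d q) (i : Fin n)
    (x : EuclideanSpace ℝ (Fin d)) : EuclideanSpace ℝ (Fin d) :=
  (d : ℝ) • EuclideanSpace.single (π.1 i) (x (π.1 i))

namespace PermKAux
variable {n d q : ℕ}

lemma nonempty (hd : 1 ≤ d) (hn : n = q * d) : Nonempty (MultisetPerm n d q) := by
  have hd0 : 0 < d := hd
  have hbd : ∀ (v : Fin d) (k : Fin q), v.1 + k.1 * d < n := by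
    intro v k
    calc v.1 + k.1 * d < d + k.1 * d := by omega
      _ = (k.1 + 1) * d := by ring
      _ ≤ q * d := Nat.mul_le_mul_right _ k.2
      _ = n := hn.symm
  refine ⟨⟨fun i => ⟨i.1 % d, Nat.mod_lt _ hd0⟩, fun v => ?_⟩⟩
  have himg : (univ.filter fun i : Fin n => (⟨i.1 % d, Nat.mod_lt _ hd0⟩ : Fin d) = v)
      = Finset.image (fun k : Fin q => (⟨v.1 + k.1 * d, hbd v k⟩ : Fin n)) univ := by
    ext i
    simp only [Finset.mem_filter, Finset.mem_univ, true_and, Finset.mem_image, Fin.ext_iff]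
    constructor
    · intro h
      have hiq : i.1 / d < q := by
        rw [Nat.div_lt_iff_lt_mul hd0]
        exact lt_of_lt_of_eq i.2 hn
      exact ⟨⟨i.1 / d, hiq⟩, by simpa [h] using Nat.mod_add_div' i.1 d⟩
    · rintro ⟨k, hk⟩
      rw [← hk]
      simp [Nat.add_mul_mod_self_right, Nat.mod_eq_of_lt v.2]
  rw [himg, Finset.card_image_of_injective _ (fun k1 k2 h => by
    have h2 : v.1 + k1.1 * d = v.1 + k2.1 * d := congrArg Fin.val h
    exact Fin.ext (Nat.eq_of_mul_eq_mul_right hd0 (by omega))), Finset.card_univ,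
    Fintype.card_fin]

def post (σ : Equiv.Perm (Fin d)) (f : MultisetPerm n d q) : MultisetPerm n d q :=
  ⟨σ ∘ f.1, fun v => by
    have h : (univ.filter fun i => (σ ∘ f.1) i = v)
        = (univ.filter fun i => f.1 i = σ.symm v) := by
      ext i; simp [Function.comp, Equiv.apply_eq_iff_eq_symm_apply]
    rw [h]; exact f.2 _⟩

def postEquiv (σ : Equiv.Perm (Fin d)) : MultisetPerm n d q ≃ MultisetPerm n d q where
  toFun := post σ
  invFun := post σ.symm
  left_inv f := Subtype.ext (funext fun i => by simp [post])
  right_inv f := Subtype.ext (funext fun i => by simp [post])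

def pre (τ : Equiv.Perm (Fin n)) (f : MultisetPerm n d q) : MultisetPerm n d q :=
  ⟨f.1 ∘ τ, fun v => by
    have h : (univ.filter fun i => (f.1 ∘ τ) i = v)
        = (univ.filter fun i => f.1 i = v).map τ.symm.toEmbedding := by
      ext j
      simp [Finset.mem_map_equiv, Function.comp]
    rw [h, Finset.card_map]; exact f.2 _⟩

def preEquiv (τ : Equiv.Perm (Fin n)) : MultisetPerm n d q ≃ MultisetPerm n d q where
  toFun := pre τ
  invFun := pre τ.symm
  left_inv f := Subtype.ext (funext fun i => by simp [pre])
  right_inv f := Subtype.ext (funext fun i => by simp [pre])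

lemma sum_post (σ : Equiv.Perm (Fin d)) (g : (Fin n → Fin d) → ℝ) :
    ∑ π : MultisetPerm n d q, g (σ ∘ π.1) = ∑ π : MultisetPerm n d q, g π.1 :=
  Fintype.sum_equiv (postEquiv σ) _ _ fun _ => rfl

lemma sum_pre (τ : Equiv.Perm (Fin n)) (g : (Fin n → Fin d) → ℝ) :
    ∑ π : MultisetPerm n d q, g (π.1 ∘ τ) = ∑ π : MultisetPerm n d q, g π.1 :=
  Fintype.sum_equiv (preEquiv τ) _ _ fun _ => rfl

lemma swap_cond {α} [DecidableEq α] (l l' x : α) : (Equiv.swap l l' x = l') ↔ x = l := by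
  rw [Equiv.apply_eq_iff_eq_symm_apply, Equiv.symm_swap, Equiv.swap_apply_right]

lemma key1 (hd : 1 ≤ d) (i : Fin n) (l : Fin d) :
    ∑ π : MultisetPerm n d q, (if π.1 i = l then (1:ℝ) else 0)
      = (Fintype.card (MultisetPerm n d q) : ℝ) / d := by
  have hconst : ∀ l' : Fin d,
      ∑ π : MultisetPerm n d q, (if π.1 i = l' then (1:ℝ) else 0)
        = ∑ π : MultisetPerm n d q, (if π.1 i = l then (1:ℝ) else 0) := by
    intro l'
    have h := sum_post (n := n) (q := q) (Equiv.swap l l')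
      (fun f => if f i = l' then (1:ℝ) else 0)
    rw [← h]
    refine Finset.sum_congr rfl fun π _ => ?_
    simp only [Function.comp_apply, swap_cond]
  have htotal : ∑ l' : Fin d, ∑ π : MultisetPerm n d q,
      (if π.1 i = l' then (1:ℝ) else 0) = (Fintype.card (MultisetPerm n d q) : ℝ) := by
    rw [Finset.sum_comm]
    simp [Finset.sum_ite_eq]
  rw [Finset.sum_congr rfl (fun l' _ => hconst l')] at htotal
  simp only [Finset.sum_const, Finset.card_univ, Fintype.card_fin, nsmul_eq_mul] at htotal
  have hd0 : (d:ℝ) ≠ 0 := by positivity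
  rw [eq_div_iff hd0]
  linear_combination htotal

lemma key2 (hq : 1 ≤ q) (hd : 1 ≤ d) (hn1 : 1 < n) {i j : Fin n} (hij : j ≠ i) (l : Fin d) :
    ∑ π : MultisetPerm n d q, (if π.1 i = l ∧ π.1 j = l then (1:ℝ) else 0)
      = (Fintype.card (MultisetPerm n d q) : ℝ) * ((q:ℝ) - 1) / (d * ((n:ℝ) - 1)) := by
  have hconstl : ∀ (j' : Fin n) (l' : Fin d),
      ∑ π : MultisetPerm n d q, (if π.1 i = l' ∧ π.1 j' = l' then (1:ℝ) else 0)
        = ∑ π : MultisetPerm n d q, (if π.1 i = l ∧ π.1 j' = l then (1:ℝ) else 0) := by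
    intro j' l'
    have h := sum_post (n := n) (q := q) (Equiv.swap l l')
      (fun f => if f i = l' ∧ f j' = l' then (1:ℝ) else 0)
    rw [← h]
    exact Finset.sum_congr rfl fun π _ => by simp only [Function.comp_apply, swap_cond]
  have hconstj : ∀ j' : Fin n, j' ≠ i →
      ∑ π : MultisetPerm n d q, (if π.1 i = l ∧ π.1 j' = l then (1:ℝ) else 0)
        = ∑ π : MultisetPerm n d q, (if π.1 i = l ∧ π.1 j = l then (1:ℝ) else 0) := by
    intro j' hj'
    have h := sum_pre (d := d) (q := q) (Equiv.swap j j')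
      (fun f => if f i = l ∧ f j = l then (1:ℝ) else 0)
    rw [← h]
    refine Finset.sum_congr rfl fun π _ => ?_
    have h1 : Equiv.swap j j' i = i := Equiv.swap_apply_of_ne_of_ne (Ne.symm hij) (Ne.symm hj')
    have h2 : Equiv.swap j j' j = j' := Equiv.swap_apply_left j j'
    simp only [Function.comp_apply, h1, h2]
  have hdouble : ∑ j' ∈ univ.erase i, ∑ l' : Fin d, ∑ π : MultisetPerm n d q,
      (if π.1 i = l' ∧ π.1 j' = l' then (1:ℝ) else 0)
      = (Fintype.card (MultisetPerm n d q) : ℝ) * ((q:ℝ) - 1) := by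
    have swap1 : ∀ j' : Fin n, ∑ l' : Fin d, ∑ π : MultisetPerm n d q,
        (if π.1 i = l' ∧ π.1 j' = l' then (1:ℝ) else 0)
        = ∑ π : MultisetPerm n d q, (if π.1 j' = π.1 i then (1:ℝ) else 0) := by
      intro j'
      rw [Finset.sum_comm]
      refine Finset.sum_congr rfl fun π _ => ?_
      by_cases h : π.1 j' = π.1 i
      · rw [if_pos h]
        rw [Finset.sum_congr rfl (fun l' _ =>
          if_congr ⟨fun hh => hh.1, fun h1 => ⟨h1, h.trans h1⟩⟩ rfl rfl)]
        simp [Finset.sum_ite_eq]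
      · rw [if_neg h]
        refine Finset.sum_eq_zero fun l' _ => ?_
        rw [if_neg]
        rintro ⟨h1, h2⟩
        exact h (h2.trans h1.symm)
    rw [Finset.sum_congr rfl (fun j' _ => swap1 j')]
    rw [Finset.sum_comm]
    have inner : ∀ π : MultisetPerm n d q,
        ∑ j' ∈ univ.erase i, (if π.1 j' = π.1 i then (1:ℝ) else 0) = (q:ℝ) - 1 := by
      intro π
      rw [Finset.sum_boole]
      have hset : (univ.erase i).filter (fun j' => π.1 j' = π.1 i)
          = (univ.filter (fun j' => π.1 j' = π.1 i)).erase i := by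
        ext j'; simp [and_comm]
      rw [hset, Finset.card_erase_of_mem (by simp), π.2 (π.1 i)]
      push_cast [Nat.cast_sub hq]
      ring
    rw [Finset.sum_congr rfl (fun π _ => inner π), Finset.sum_const, Finset.card_univ,
      nsmul_eq_mul]
  rw [Finset.sum_congr rfl (fun j' hj' => by
    rw [Finset.sum_congr rfl (fun l' _ => hconstl j' l'), Finset.sum_const,
      Finset.card_univ, Fintype.card_fin, nsmul_eq_mul,
      hconstj j' (Finset.ne_of_mem_erase hj')])] at hdouble
  rw [Finset.sum_const, Finset.card_erase_of_mem (Finset.mem_univ i), Finset.card_univ,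
    Fintype.card_fin, nsmul_eq_mul] at hdouble
  have hn0 : ((n:ℝ) - 1) ≠ 0 := by
    have : (1:ℝ) < n := by exact_mod_cast hn1
    linarith
  have hd0 : (d:ℝ) ≠ 0 := by positivity
  have hcast : ((n - 1 : ℕ) : ℝ) = (n:ℝ) - 1 := by
    push_cast [Nat.cast_sub (le_of_lt hn1)]; ring
  rw [hcast] at hdouble
  rw [eq_div_iff (mul_ne_zero hd0 hn0)]
  linear_combination hdouble

lemma sum_Z (hd : 1 ≤ d) (b : Fin n → ℝ) (l : Fin d) :
    ∑ π : MultisetPerm n d q, ∑ i, b i * (if π.1 i = l then (1:ℝ) else 0)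
      = (Fintype.card (MultisetPerm n d q) : ℝ) / d * ∑ i, b i := by
  rw [Finset.sum_comm]
  rw [Finset.sum_congr rfl (fun i _ => by
    rw [← Finset.mul_sum, key1 hd i l])]
  rw [← Finset.sum_mul]
  ring

lemma sum_Z_sq (hq : 1 ≤ q) (hd : 1 ≤ d) (hn1 : 1 < n) (b : Fin n → ℝ) (l : Fin d) :
    ∑ π : MultisetPerm n d q, (∑ i, b i * (if π.1 i = l then (1:ℝ) else 0)) ^ 2
      = (Fintype.card (MultisetPerm n d q) : ℝ) / d * ∑ i, (b i) ^ 2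
        + (Fintype.card (MultisetPerm n d q) : ℝ) * ((q:ℝ) - 1) / (d * ((n:ℝ) - 1))
          * ((∑ i, b i) ^ 2 - ∑ i, (b i) ^ 2) := by
  have expand : ∀ π : MultisetPerm n d q,
      (∑ i, b i * (if π.1 i = l then (1:ℝ) else 0)) ^ 2
        = ∑ i, ∑ j, b i * b j * (if π.1 i = l ∧ π.1 j = l then (1:ℝ) else 0) := by
    intro π
    rw [sq, Finset.sum_mul_sum]
    refine Finset.sum_congr rfl fun i _ => Finset.sum_congr rfl fun j _ => ?_
    by_cases h1 : π.1 i = l <;> by_cases h2 : π.1 j = l <;> simp [h1, h2]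
  rw [Finset.sum_congr rfl (fun π _ => expand π), Finset.sum_comm]
  rw [Finset.sum_congr rfl (fun i _ => by rw [Finset.sum_comm])]
  have hterm : ∀ i j : Fin n,
      ∑ π : MultisetPerm n d q, b i * b j * (if π.1 i = l ∧ π.1 j = l then (1:ℝ) else 0)
        = b i * b j * ∑ π : MultisetPerm n d q, (if π.1 i = l ∧ π.1 j = l then (1:ℝ) else 0) :=
    fun i j => by rw [Finset.mul_sum]
  rw [Finset.sum_congr rfl (fun i _ => Finset.sum_congr rfl (fun j _ => hterm i j))]
  set N : ℝ := (Fintype.card (MultisetPerm n d q) : ℝ)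
  set c2 : ℝ := N * ((q:ℝ) - 1) / (d * ((n:ℝ) - 1))
  have hsplit : ∀ i : Fin n,
      ∑ j, b i * b j * (∑ π : MultisetPerm n d q, (if π.1 i = l ∧ π.1 j = l then (1:ℝ) else 0))
        = b i * b i * (N / d) + c2 * (b i * (∑ j, b j) - b i * b i) := by
    intro i
    rw [← Finset.sum_erase_add _ _ (Finset.mem_univ i)]
    have hii : ∑ π : MultisetPerm n d q, (if π.1 i = l ∧ π.1 i = l then (1:ℝ) else 0)
        = N / d := by
      rw [Finset.sum_congr rfl (fun π _ => if_congr (and_self_iff) rfl rfl)]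
      exact key1 hd i l
    rw [hii]
    rw [Finset.sum_congr rfl (fun j hj => by
      rw [key2 hq hd hn1 (Finset.ne_of_mem_erase hj) l])]
    rw [Finset.sum_congr rfl (fun j _ => by ring : ∀ j ∈ univ.erase i,
      b i * b j * c2 = c2 * (b i * b j))]
    rw [← Finset.mul_sum, ← Finset.mul_sum, Finset.sum_erase_eq_sub (Finset.mem_univ i)]
    ring
  rw [Finset.sum_congr rfl (fun i _ => hsplit i)]
  rw [Finset.sum_add_distrib]
  rw [← Finset.sum_mul, ← Finset.mul_sum]
  rw [Finset.sum_sub_distrib, ← Finset.sum_mul]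
  simp only [← sq]
  ring

lemma norm_sq_eq (y : EuclideanSpace ℝ (Fin d)) : ‖y‖^2 = ∑ l, (y l)^2 := by
  rw [EuclideanSpace.norm_eq, Real.sq_sqrt (by positivity)]
  simp [Real.norm_eq_abs, sq_abs]

/-- The per-coordinate identity giving the AB (in)equality. -/
lemma per_coord (hq : 1 ≤ q) (hd : 1 ≤ d) (hn1 : 1 < n) (hn : n = q * d)
    (b : Fin n → ℝ) (l : Fin d) :
    (Fintype.card (MultisetPerm n d q) : ℝ)⁻¹ *
      ∑ π : MultisetPerm n d q,
        ((n:ℝ)⁻¹ * ((d:ℝ) * ∑ i, b i * (if π.1 i = l then (1:ℝ) else 0))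
          - (n:ℝ)⁻¹ * ∑ i, b i) ^ 2
    = (1 - ((n : ℝ) - d) / ((n : ℝ) - 1)) * ((n : ℝ)⁻¹ * ∑ i, (b i) ^ 2)
      - (1 - ((n : ℝ) - d) / ((n : ℝ) - 1)) * ((n : ℝ)⁻¹ * ∑ i, b i) ^ 2 := by
  have hNpos : 0 < Fintype.card (MultisetPerm n d q) :=
    @Fintype.card_pos _ _ (nonempty hd hn)
  set N : ℝ := (Fintype.card (MultisetPerm n d q) : ℝ) with hN
  have hN0 : N ≠ 0 := by positivity
  set S : ℝ := ∑ i, b i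
  set Q : ℝ := ∑ i, (b i) ^ 2
  set e : ℝ := (n:ℝ)⁻¹ * d
  set f : ℝ := (n:ℝ)⁻¹ * S
  have hexp : ∀ π : MultisetPerm n d q,
      ((n:ℝ)⁻¹ * ((d:ℝ) * ∑ i, b i * (if π.1 i = l then (1:ℝ) else 0))
          - (n:ℝ)⁻¹ * ∑ i, b i) ^ 2
      = e ^ 2 * (∑ i, b i * (if π.1 i = l then (1:ℝ) else 0)) ^ 2
        + (-(2 * e * f)) * (∑ i, b i * (if π.1 i = l then (1:ℝ) else 0)) + f ^ 2 := by
    intro π; simp only [e, f, S]; ring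
  rw [Finset.sum_congr rfl (fun π _ => hexp π), Finset.sum_add_distrib,
    Finset.sum_add_distrib, ← Finset.mul_sum, ← Finset.mul_sum,
    sum_Z_sq hq hd hn1 b l, sum_Z hd b l, Finset.sum_const, Finset.card_univ, nsmul_eq_mul]
  have hnr : (n:ℝ) = (q:ℝ) * d := by rw [hn]; push_cast; ring
  have hd0 : (d:ℝ) ≠ 0 := by positivity
  have hq0 : (q:ℝ) ≠ 0 := by positivity
  have hn0 : (n:ℝ) ≠ 0 := by positivity
  have hn10 : ((n:ℝ) - 1) ≠ 0 := by
    have : (1:ℝ) < n := by exact_mod_cast hn1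
    linarith
  rw [hnr] at hn0 hn10 ⊢
  simp only [e, f, hnr, ← hN]
  field_simp
  ring

end PermKAux

/-- For `n = q·d`, `n > 1`, the PermK compressors are unbiased and satisfy
the AB inequality with `A = B = 1 − (n−d)/(n−1)`, with expectation over the uniformly
random assignment `π`. -/
theorem permK_nd_unbiased_and_AB
    {q n d : ℕ} (hq : 1 ≤ q) (hd : 1 ≤ d) (hn1 : 1 < n) (hn : n = q * d) :
    (∀ (i : Fin n) (x : EuclideanSpace ℝ (Fin d)),
      finExp (fun π : MultisetPerm n d q => permK n d q π i x) = x) ∧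
    (∀ a : Fin n → EuclideanSpace ℝ (Fin d),
      finExp (fun π : MultisetPerm n d q =>
          ‖(n : ℝ)⁻¹ • ∑ i, permK n d q π i (a i) - (n : ℝ)⁻¹ • ∑ i, a i‖ ^ 2) ≤
        (1 - ((n : ℝ) - d) / ((n : ℝ) - 1)) * ((n : ℝ)⁻¹ * ∑ i, ‖a i‖ ^ 2) -
          (1 - ((n : ℝ) - d) / ((n : ℝ) - 1)) * ‖(n : ℝ)⁻¹ • ∑ i, a i‖ ^ 2) := by
  have hNpos : 0 < Fintype.card (MultisetPerm n d q) :=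
    @Fintype.card_pos _ _ (PermKAux.nonempty hd hn)
  have hN0 : (Fintype.card (MultisetPerm n d q) : ℝ) ≠ 0 := by positivity
  have hd0 : (d:ℝ) ≠ 0 := by positivity
  have hsingle : ∀ (π : MultisetPerm n d q) (i : Fin n) (x : EuclideanSpace ℝ (Fin d))
      (l : Fin d), (permK n d q π i x) l
        = (d:ℝ) * (x l * (if π.1 i = l then (1:ℝ) else 0)) := by
    intro π i x l
    show (d:ℝ) * (EuclideanSpace.single (π.1 i) (x (π.1 i)) l) = _
    rw [EuclideanSpace.single_apply]
    by_cases h : π.1 i = l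
    · rw [if_pos h.symm, if_pos h, h]; ring
    · rw [if_neg (fun hh => h hh.symm), if_neg h]; ring
  constructor
  · intro i x
    refine PiLp.ext fun l => ?_
    show (Fintype.card (MultisetPerm n d q) : ℝ)⁻¹ *
      ((∑ π : MultisetPerm n d q, permK n d q π i x) l) = x l
    rw [WithLp.ofLp_sum, Finset.sum_apply l univ _]
    rw [Finset.sum_congr rfl (fun π _ => hsingle π i x l)]
    rw [← Finset.mul_sum, ← Finset.mul_sum, PermKAux.key1 hd i l]
    field_simp
  · intro a
    -- coordinates of the difference
    have hcoord : ∀ (π : MultisetPerm n d q) (l : Fin d),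
        ((n : ℝ)⁻¹ • ∑ i, permK n d q π i (a i) - (n : ℝ)⁻¹ • ∑ i, a i) l
          = (n:ℝ)⁻¹ * ((d:ℝ) * ∑ i, a i l * (if π.1 i = l then (1:ℝ) else 0))
            - (n:ℝ)⁻¹ * ∑ i, a i l := by
      intro π l
      show (n:ℝ)⁻¹ * ((∑ i, permK n d q π i (a i)) l)
          - (n:ℝ)⁻¹ * ((∑ i, a i) l) = _
      rw [WithLp.ofLp_sum, WithLp.ofLp_sum, Finset.sum_apply l univ _, Finset.sum_apply l univ _]
      rw [Finset.sum_congr rfl (fun i _ => hsingle π i (a i) l), ← Finset.mul_sum]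
    -- rewrite the expectation as a sum over coordinates
    have h1 : ∀ π : MultisetPerm n d q,
        ‖(n : ℝ)⁻¹ • ∑ i, permK n d q π i (a i) - (n : ℝ)⁻¹ • ∑ i, a i‖ ^ 2
          = ∑ l, ((n:ℝ)⁻¹ * ((d:ℝ) * ∑ i, a i l * (if π.1 i = l then (1:ℝ) else 0))
                - (n:ℝ)⁻¹ * ∑ i, a i l) ^ 2 := by
      intro π
      rw [PermKAux.norm_sq_eq]
      exact Finset.sum_congr rfl fun l _ => by rw [hcoord π l]
    have hLHS : finExp (fun π : MultisetPerm n d q =>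
          ‖(n : ℝ)⁻¹ • ∑ i, permK n d q π i (a i) - (n : ℝ)⁻¹ • ∑ i, a i‖ ^ 2)
        = ∑ l, (Fintype.card (MultisetPerm n d q) : ℝ)⁻¹ *
            ∑ π : MultisetPerm n d q,
              ((n:ℝ)⁻¹ * ((d:ℝ) * ∑ i, a i l * (if π.1 i = l then (1:ℝ) else 0))
                - (n:ℝ)⁻¹ * ∑ i, a i l) ^ 2 := by
      calc finExp (fun π : MultisetPerm n d q =>
          ‖(n : ℝ)⁻¹ • ∑ i, permK n d q π i (a i) - (n : ℝ)⁻¹ • ∑ i, a i‖ ^ 2)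
          = (Fintype.card (MultisetPerm n d q) : ℝ)⁻¹ * ∑ π : MultisetPerm n d q,
            ‖(n : ℝ)⁻¹ • ∑ i, permK n d q π i (a i) - (n : ℝ)⁻¹ • ∑ i, a i‖ ^ 2 := rfl
        _ = (Fintype.card (MultisetPerm n d q) : ℝ)⁻¹ * ∑ π : MultisetPerm n d q,
            ∑ l, ((n:ℝ)⁻¹ * ((d:ℝ) * ∑ i, a i l * (if π.1 i = l then (1:ℝ) else 0))
                - (n:ℝ)⁻¹ * ∑ i, a i l) ^ 2 := by
            rw [Finset.sum_congr rfl fun π _ => h1 π]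
        _ = ∑ l, (Fintype.card (MultisetPerm n d q) : ℝ)⁻¹ *
            ∑ π : MultisetPerm n d q,
              ((n:ℝ)⁻¹ * ((d:ℝ) * ∑ i, a i l * (if π.1 i = l then (1:ℝ) else 0))
                - (n:ℝ)⁻¹ * ∑ i, a i l) ^ 2 := by
            rw [Finset.sum_comm, Finset.mul_sum]
    rw [hLHS]
    rw [Finset.sum_congr rfl (fun l _ =>
      PermKAux.per_coord hq hd hn1 hn (fun i => a i l) l)]
    -- rewrite the RHS
    have hR1 : ∑ i, ‖a i‖ ^ 2 = ∑ l, ∑ i, (a i l) ^ 2 := by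
      rw [Finset.sum_congr rfl (fun i _ => PermKAux.norm_sq_eq (a i))]
      exact Finset.sum_comm
    have hR2 : ‖(n : ℝ)⁻¹ • ∑ i, a i‖ ^ 2 = ∑ l, ((n:ℝ)⁻¹ * ∑ i, a i l) ^ 2 := by
      rw [PermKAux.norm_sq_eq]
      refine Finset.sum_congr rfl fun l _ => ?_
      congr 1
      show (n:ℝ)⁻¹ * ((∑ i, a i) l) = _
      rw [WithLp.ofLp_sum, Finset.sum_apply l univ _]
    refine le_of_eq ?_
    rw [hR1, hR2]
    simp only [Finset.mul_sum, ← Finset.sum_sub_distrib]
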